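/- arXiv:1610.02243 — 2 statements merged into one kernel-verified Lean document; each statement's English description precedes it below -/
import Mathlib

section
/- The map ψ̄ : 𝒜 → 𝒜' sending the class of (c_1, c_2, ..., c_n) to the class of (c_1+2, 1, c_2+2, 1, ..., c_n+2, 1) is a well-defined bijection from the set of quiddity cycles onto the set 𝒜' of quiddity cycles of even length whose entries equal to 1 make up exactly half of all entries. -/
/-- One generating move of the dihedral action on finite sequences:
cyclic rotation by one, or reversal. -/
def dihStep (c d : List ℕ) : Prop := d = c.rotate 1 ∨ d = c.reverse

/-- The equivalence relation on finite sequences generated by cyclic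
rotations and reversal (the dihedral group action). -/
def DihEquiv : List ℕ → List ℕ → Prop := Relation.EqvGen dihStep

/-- The lists that are representatives of quiddity cycles: the smallest
dihedrally closed collection containing `(0,0)` and closed under the rule
`(c₁,…,cₙ) ↦ (c₁+1, 1, c₂+1, c₃, …, cₙ)`. -/
inductive IsQuiddity : List ℕ → Prop
  | base : IsQuiddity [0, 0]
  | dih {c d : List ℕ} : IsQuiddity c → dihStep c d → IsQuiddity d
  | grow {a b : ℕ} {t : List ℕ} : IsQuiddity (a :: b :: t) →
      IsQuiddity ((a + 1) :: 1 :: (b + 1) :: t)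

/-- The (class of the) cycle `c` contains the finite sequence `d`:
some representative of `c` has `d` as a block of consecutive entries. -/
def CycContains (c d : List ℕ) : Prop := ∃ c', DihEquiv c c' ∧ d <:+: c'

/-- The setoid given by the dihedral group action on finite sequences. -/
def dihSetoid : Setoid (List ℕ) := Relation.EqvGen.setoid dihStep

/-- Classes of finite sequences modulo the dihedral action. -/
abbrev Cyc : Type := Quotient dihSetoid

/-- The class of a finite sequence modulo the dihedral action. -/
def cyc (c : List ℕ) : Cyc := Quotient.mk dihSetoid c

/-- The set `𝒜` of quiddity cycles, as classes. -/
def QuiddityCyc : Set Cyc := {x | ∃ c, IsQuiddity c ∧ x = cyc c}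

/-- The set `𝒜'` of quiddity cycles of even length whose entries equal to `1`
make up exactly half of all entries. -/
def QuiddityCyc' : Set Cyc :=
  {x | ∃ c, IsQuiddity c ∧ Even c.length ∧ c.count 1 = c.length / 2 ∧ x = cyc c}

/-- The map `ψ` on finite sequences: `(c₁,…,cₘ) ↦ (c₁+2, 1, c₂+2, 1, …, cₘ+2, 1)`. -/
def psiL (c : List ℕ) : List ℕ := (c.map fun a => [a + 2, 1]).flatten

-- DihEquiv basics
lemma dih_refl (l : List ℕ) : DihEquiv l l := Relation.EqvGen.refl l
lemma dih_symm {l l' : List ℕ} (h : DihEquiv l l') : DihEquiv l' l := Relation.EqvGen.symm _ _ h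
lemma dih_trans {a b c : List ℕ} (h : DihEquiv a b) (h' : DihEquiv b c) : DihEquiv a c :=
  Relation.EqvGen.trans _ _ _ h h'
lemma dih_rev (l : List ℕ) : DihEquiv l l.reverse := Relation.EqvGen.rel _ _ (Or.inr rfl)
lemma dih_rot1 (l : List ℕ) : DihEquiv l (l.rotate 1) := Relation.EqvGen.rel _ _ (Or.inl rfl)

lemma dih_rot (l : List ℕ) (n : ℕ) : DihEquiv l (l.rotate n) := by
  induction n with
  | zero => simpa using dih_refl l
  | succ n ih =>
      have : (l.rotate n).rotate 1 = l.rotate (n+1) := List.rotate_rotate l n 1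
      exact dih_trans ih (this ▸ dih_rot1 (l.rotate n))

lemma dih_of_isRotated {l l' : List ℕ} (h : l ~r l') : DihEquiv l l' := by
  obtain ⟨n, rfl⟩ := h; exact dih_rot l n

lemma dih_append (u v : List ℕ) : DihEquiv (u ++ v) (v ++ u) :=
  dih_of_isRotated (List.isRotated_append)

/-- normal form -/
lemma dih_normal {l l' : List ℕ} (h : DihEquiv l l') : l ~r l' ∨ l.reverse ~r l' := by
  induction h with
  | rel a b hab =>
      rcases hab with h1 | h2
      · exact Or.inl ⟨1, h1.symm⟩
      · exact Or.inr (h2 ▸ List.IsRotated.refl _)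
  | refl a => exact Or.inl (List.IsRotated.refl a)
  | symm a b _ ih =>
      rcases ih with h1 | h2
      · exact Or.inl h1.symm
      · right
        have : b ~r a.reverse := h2.symm
        have := this.reverse
        simpa using this.symm.symm
  | trans a b c _ _ ih1 ih2 =>
      rcases ih1 with h1 | h1 <;> rcases ih2 with h2 | h2
      · exact Or.inl (h1.trans h2)
      · right
        have := h1.reverse
        exact this.trans h2
      · exact Or.inr (h1.trans h2)
      · left
        have : a.reverse.reverse ~r b.reverse := h1.reverse
        simp at this
        exact this.trans h2

-- quiddity basics
lemma quid_rot1 {l : List ℕ} (h : IsQuiddity l) : IsQuiddity (l.rotate 1) :=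
  h.dih (Or.inl rfl)

lemma quid_rot {l : List ℕ} (h : IsQuiddity l) (n : ℕ) : IsQuiddity (l.rotate n) := by
  induction n with
  | zero => simpa using h
  | succ n ih => exact (List.rotate_rotate l n 1) ▸ quid_rot1 ih

lemma quid_unrot {l : List ℕ} {n : ℕ} (h : IsQuiddity (l.rotate n)) : IsQuiddity l := by
  rcases eq_or_ne l [] with rfl | hl
  · simpa using h
  have hlen : 1 ≤ l.length := List.length_pos_iff.mpr hl
  have h2 := quid_rot h (l.length * (n+1) - n)
  rw [List.rotate_rotate] at h2
  have hle : n + 1 ≤ l.length * (n+1) := Nat.le_mul_of_pos_left _ hlen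
  have heq : n + (l.length * (n+1) - n) = l.length * (n+1) := by omega
  rw [heq, List.rotate_length_mul] at h2
  exact h2

lemma quid_dih {l l' : List ℕ} (h : IsQuiddity l) (he : DihEquiv l l') : IsQuiddity l' := by
  have key : ∀ a b : List ℕ, DihEquiv a b → (IsQuiddity a ↔ IsQuiddity b) := by
    intro a b hab
    induction hab with
    | rel a b hab =>
        constructor
        · intro ha; exact ha.dih hab
        · intro hb
          rcases hab with h1 | h2
          · exact quid_unrot (h1 ▸ hb)
          · have := hb.dih (Or.inr rfl); simpa [h2] using this
    | refl a => exact Iff.rfl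
    | symm a b _ ih => exact ih.symm
    | trans a b c _ _ ih1 ih2 => exact ih1.trans ih2
  exact (key l l' he).mp h

lemma quid_isRot {l l' : List ℕ} (h : IsQuiddity l) (hr : l ~r l') : IsQuiddity l' :=
  quid_dih h (dih_of_isRotated hr)

lemma quid_swap {u v : List ℕ} (h : IsQuiddity (u ++ v)) : IsQuiddity (v ++ u) :=
  quid_isRot h List.isRotated_append

lemma quid_len_ge2 {l : List ℕ} (h : IsQuiddity l) : 2 ≤ l.length := by
  induction h with
  | base => simp
  | dih _ hst ih =>
      rcases hst with rfl | rfl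
      · simpa using ih
      · simpa using ih
  | grow _ ih => simp

lemma quid_len2 {l : List ℕ} (h : IsQuiddity l) (hl : l.length = 2) : l = [0,0] := by
  induction h with
  | base => rfl
  | dih hc hst ih =>
      rcases hst with rfl | rfl
      · have h2 := ih (by simpa using hl)
        rw [h2]; decide
      · have h2 := ih (by simpa using hl)
        rw [h2]; decide
  | grow _ ih => simp at hl

lemma quid_sum {l : List ℕ} (h : IsQuiddity l) : l.sum + 6 = 3 * l.length := by
  induction h with
  | base => simp
  | dih _ hst ih =>
      rcases hst with rfl | rfl
      · rw [(List.rotate_perm _ _).sum_eq, List.length_rotate]; exact ih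
      · rw [List.sum_reverse, List.length_reverse]; exact ih
  | grow _ ih => simp at ih ⊢; omega

lemma quid_pos {l : List ℕ} (h : IsQuiddity l) (hl : 3 ≤ l.length) : ∀ v ∈ l, 1 ≤ v := by
  induction h with
  | base => simp at hl
  | dih hc hst ih =>
      rcases hst with rfl | rfl
      · intro v hv
        exact ih (by simpa using hl) v ((List.rotate_perm _ _).mem_iff.mp hv)
      · intro v hv
        exact ih (by simpa using hl) v (by simpa using hv)
  | @grow a b t hc ih =>
      intro v hv
      rcases (quid_len_ge2 hc).lt_or_eq with hgt | heq
      · have h3 : 3 ≤ (a :: b :: t).length := by simp at hgt ⊢; omega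
        simp at hv
        rcases hv with rfl | rfl | rfl | hv
        · omega
        · omega
        · omega
        · have := ih h3 v (by simp [hv]); omega
      · have h2 := quid_len2 hc heq.symm
        have ht : t = [] := by
          cases t with
          | nil => rfl
          | cons w tt => simp at h2
        subst ht
        simp at hv h2
        rcases hv with rfl | rfl | rfl
        · omega
        · omega
        · omega

lemma quid_len3 {l : List ℕ} (h : IsQuiddity l) (hl : l.length = 3) : l = [1,1,1] := by
  obtain ⟨p, q, r, rfl⟩ : ∃ p q r, l = [p, q, r] := by
    rcases l with _ | ⟨p, _ | ⟨q, _ | ⟨r, _ | ⟨s, rest⟩⟩⟩⟩ <;> simp at hl ⊢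
  have hs := quid_sum h
  have hp := quid_pos h (by simp)
  have h1 := hp p (by simp)
  have h2 := hp q (by simp)
  have h3 := hp r (by simp)
  simp at hs
  have h4 : p = 1 ∧ q = 1 ∧ r = 1 := by omega
  simp [h4.1, h4.2.1, h4.2.2]

lemma quid_inv {l : List ℕ} (h : IsQuiddity l) (hl : 3 ≤ l.length) :
    ∃ x y s, IsQuiddity (x :: y :: s) ∧ DihEquiv ((x+1) :: 1 :: (y+1) :: s) l := by
  induction h with
  | base => simp at hl
  | dih hc hst ih =>
      rcases hst with rfl | rfl
      · obtain ⟨x, y, s, hq, hd⟩ := ih (by simpa using hl)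
        exact ⟨x, y, s, hq, dih_trans hd (dih_rot1 _)⟩
      · obtain ⟨x, y, s, hq, hd⟩ := ih (by simpa using hl)
        exact ⟨x, y, s, hq, dih_trans hd (dih_rev _)⟩
  | grow hc => exact ⟨_, _, _, hc, dih_refl _⟩

def qsiL (c : List ℕ) : List ℕ := (c.map fun a => [1, a + 2]).flatten

@[simp] lemma psiL_nil : psiL [] = [] := rfl
@[simp] lemma psiL_cons (a : ℕ) (t : List ℕ) : psiL (a :: t) = (a+2) :: 1 :: psiL t := rfl
@[simp] lemma qsiL_nil : qsiL [] = [] := rfl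
@[simp] lemma qsiL_cons (a : ℕ) (t : List ℕ) : qsiL (a :: t) = 1 :: (a+2) :: qsiL t := rfl

lemma psiL_append (u v : List ℕ) : psiL (u ++ v) = psiL u ++ psiL v := by
  simp [psiL]
lemma qsiL_append (u v : List ℕ) : qsiL (u ++ v) = qsiL u ++ qsiL v := by
  simp [qsiL]

@[simp] lemma psiL_length (c : List ℕ) : (psiL c).length = 2 * c.length := by
  induction c with
  | nil => simp
  | cons a t ih => simp [ih]; omega

lemma psiL_count (c : List ℕ) : (psiL c).count 1 = c.length := by
  induction c with
  | nil => simp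
  | cons a t ih => simp [List.count_cons, ih]

lemma psiL_eq_nil {c : List ℕ} (h : psiL c = []) : c = [] := by
  cases c with
  | nil => rfl
  | cons a t => simp at h

lemma psiL_inj : ∀ {u v : List ℕ}, psiL u = psiL v → u = v := by
  intro u
  induction u with
  | nil => intro v h; cases v with
    | nil => rfl
    | cons a t => simp at h
  | cons a t ih =>
      intro v h
      cases v with
      | nil => simp at h
      | cons b s =>
          simp at h
          obtain ⟨h1, h2⟩ := h
          rw [h1, ih h2]

lemma qsiL_concat_one (t : List ℕ) : qsiL t ++ [1] = 1 :: psiL t := by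
  induction t with
  | nil => rfl
  | cons a s ih => simp at ih ⊢; exact ih

lemma psiL_reverse (c : List ℕ) : (psiL c).reverse = qsiL c.reverse := by
  induction c with
  | nil => rfl
  | cons a t ih =>
      simp only [psiL_cons, List.reverse_cons, List.reverse_cons]
      rw [ih, qsiL_append]
      simp

lemma qsiL_isRot_psiL (c : List ℕ) : qsiL c ~r psiL c := by
  cases c with
  | nil => exact List.IsRotated.refl _
  | cons a t =>
      have h1 : qsiL (a :: t) = [1] ++ ((a+2) :: qsiL t) := by simp
      have h2 : psiL (a :: t) = ((a+2) :: qsiL t) ++ [1] := by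
        simp only [psiL_cons, List.cons_append]
        rw [qsiL_concat_one]
      rw [h1, h2]
      exact List.isRotated_append

lemma psiL_dih {c d : List ℕ} (h : DihEquiv c d) : DihEquiv (psiL c) (psiL d) := by
  induction h with
  | rel a b hab =>
      rcases hab with rfl | rfl
      · cases a with
        | nil => simp [dih_refl]
        | cons z t =>
            have h1 : (z :: t).rotate 1 = t ++ [z] := by
              rw [List.rotate_cons_succ, List.rotate_zero]
            rw [h1, psiL_append]
            have : psiL (z :: t) = psiL [z] ++ psiL t := by simp
            rw [this]
            exact dih_append _ _
      · have h1 : DihEquiv (psiL a) (psiL a).reverse := dih_rev _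
        rw [psiL_reverse] at h1
        exact dih_trans h1 (dih_of_isRotated (qsiL_isRot_psiL a.reverse))
  | refl a => exact dih_refl _
  | symm a b _ ih => exact dih_symm ih
  | trans a b c _ _ ih1 ih2 => exact dih_trans ih1 ih2

/-- ψ preserves quiddity. -/
lemma quid_psiL {c : List ℕ} (h : IsQuiddity c) : IsQuiddity (psiL c) := by
  induction h with
  | base =>
      have h1 : IsQuiddity [1, 1, 1] := by
        have := IsQuiddity.base.grow (a := 0) (b := 0) (t := [])
        simpa using this
      have h2 : IsQuiddity [2, 1, 2, 1] := by
        have := h1.grow (a := 1) (b := 1) (t := [1])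
        simpa using this
      simpa [psiL] using h2
  | dih hc hst ih =>
      exact quid_dih ih (psiL_dih (Relation.EqvGen.rel _ _ hst))
  | @grow a b t hc ih =>
      -- ih : IsQuiddity (psiL (a :: b :: t)) = (a+2)::1::(b+2)::1::psiL t
      have h0 : IsQuiddity ((a+2) :: (1 :: (b+2) :: 1 :: psiL t)) := by simpa using ih
      have h1 : IsQuiddity ((1 :: (b+2) :: 1 :: psiL t) ++ [a+2]) :=
        quid_swap (u := [a+2]) h0
      have h1' : IsQuiddity (1 :: (b+2) :: (1 :: psiL t ++ [a+2])) := by simpa using h1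
      have h2 := h1'.grow
      -- h2 : IsQuiddity (2 :: 1 :: (b+3) :: (1 :: psiL t ++ [a+2]))
      have h3 : IsQuiddity ([a+2] ++ (2 :: 1 :: (b+2+1) :: 1 :: psiL t)) := by
        refine quid_swap (v := [a+2]) ?_
        simpa using h2
      have h4 : IsQuiddity ((a+2) :: 2 :: (1 :: (b+3) :: 1 :: psiL t)) := by
        have : b + 2 + 1 = b + 3 := rfl
        simpa [this] using h3
      have h5 := h4.grow
      -- h5 : (a+3) :: 1 :: 3 :: 1 :: (b+3) :: 1 :: psiL t
      have : psiL ((a+1) :: 1 :: (b+1) :: t) = (a+3) :: 1 :: 3 :: 1 :: (b+3) :: 1 :: psiL t := by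
        simp [psiL]
      rw [this]
      simpa using h5

/-- split lemma for injectivity -/
lemma psiL_split : ∀ (u A B : List ℕ), psiL u = A ++ B →
    (∃ u1 u2, u = u1 ++ u2 ∧ A = psiL u1 ∧ B = psiL u2) ∨
    (∃ u1 w u2, u = u1 ++ w :: u2 ∧ A = psiL u1 ++ [w+2] ∧ B = 1 :: psiL u2) := by
  intro u
  induction u with
  | nil =>
      intro A B h
      simp at h
      left
      exact ⟨[], [], by simp, by simp [h.1], by simp [h.2]⟩
  | cons w u' ih =>
      intro A B h
      cases A with
      | nil => exact Or.inl ⟨[], w :: u', by simp, rfl, by simpa using h.symm⟩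
      | cons a0 A' =>
          simp only [psiL_cons, List.cons_append] at h
          injection h with ha0 h
          cases A' with
          | nil =>
              right
              simp only [List.nil_append] at h
              exact ⟨[], w, u', by simp, by simp [ha0], h.symm⟩
          | cons a1 A'' =>
              simp only [List.cons_append] at h
              injection h with ha1 h
              rcases ih A'' B h with ⟨u1, u2, hu, hA, hB⟩ | ⟨u1, w', u2, hu, hA, hB⟩
              · left
                exact ⟨w :: u1, u2, by simp [hu], by simp [ha0, ha1, hA], hB⟩
              · right
                exact ⟨w :: u1, w', u2, by simp [hu], by simp [ha0, ha1, hA], hB⟩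

/-- core injectivity up to rotation -/
lemma psiL_isRot_inj {u v : List ℕ} (h : psiL u ~r psiL v) : u ~r v := by
  obtain ⟨k, hk⟩ := h
  rcases eq_or_ne u [] with rfl | hu
  · simp at hk
    rw [psiL_eq_nil hk]
  · have hlen : 0 < (psiL u).length := by
      rcases u with _ | ⟨a, t⟩
      · simp at hu
      · simp
    have hk' : (psiL u).rotate (k % (psiL u).length) = psiL v := by
      rw [List.rotate_mod]; exact hk
    have hle : k % (psiL u).length ≤ (psiL u).length := le_of_lt (Nat.mod_lt _ hlen)
    rw [List.rotate_eq_drop_append_take hle] at hk'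
    set A := (psiL u).take (k % (psiL u).length) with hA
    set B := (psiL u).drop (k % (psiL u).length) with hB
    have hsplit : psiL u = A ++ B := by rw [hA, hB, List.take_append_drop]
    rcases psiL_split u A B hsplit with ⟨u1, u2, hu', hA', hB'⟩ | ⟨u1, w, u2, hu', hA', hB'⟩
    · rw [hA', hB', ← psiL_append] at hk'
      have := psiL_inj hk'
      rw [hu', ← this]
      exact List.isRotated_append
    · rw [hA', hB'] at hk'
      rcases v with _ | ⟨z, v'⟩
      · simp at hk'
      · simp at hk'

lemma quid_111 : IsQuiddity [1, 1, 1] := by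
  have := IsQuiddity.base.grow (a := 0) (b := 0) (t := [])
  simpa using this

lemma shrinkRot (n : ℕ)
    (IH : ∀ m, m < n → ∀ (t : List ℕ) (a b : ℕ), t.length = m →
      IsQuiddity ((a+1) :: 1 :: (b+1) :: t) → IsQuiddity (a :: b :: t))
    (x y a b : ℕ) (s t : List ℕ)
    (hq : IsQuiddity (x :: y :: s))
    (hr : ((x+1) :: 1 :: (y+1) :: s) ~r ((a+1) :: 1 :: (b+1) :: t))
    (hn : t.length = n) (hn1 : 1 ≤ n) :
    IsQuiddity (a :: b :: t) := by
  obtain ⟨k, hk⟩ := hr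
  have hst : s.length = t.length := by
    have := congrArg List.length hk
    simpa using this
  have hpos3 : 3 ≤ (x :: y :: s).length := by simp; omega
  have hxpos : 1 ≤ x := quid_pos hq hpos3 x (by simp)
  have hypos : 1 ≤ y := quid_pos hq hpos3 y (by simp)
  set G := (x+1) :: 1 :: (y+1) :: s with hGdef
  have hlenG : 0 < G.length := by simp [hGdef]
  have hk' : G.rotate (k % G.length) = (a+1) :: 1 :: (b+1) :: t := by
    rw [List.rotate_mod]; exact hk
  have hle : k % G.length ≤ G.length := le_of_lt (Nat.mod_lt _ hlenG)
  rw [List.rotate_eq_drop_append_take hle] at hk'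
  have hGsplit : G.take (k % G.length) ++ G.drop (k % G.length) = G := List.take_append_drop _ _
  set p := G.take (k % G.length) with hpdef
  set q := G.drop (k % G.length) with hqdef
  clear_value p q
  clear hpdef hqdef hk hle
  have hP : q ++ p = (a+1) :: 1 :: (b+1) :: t := hk'
  have hG : p ++ q = (x+1) :: 1 :: (y+1) :: s := hGsplit
  clear hk' hGsplit hGdef hlenG
  clear_value G
  rcases q with _ | ⟨g, _ | ⟨h2, q''⟩⟩
  · -- q = []
    simp only [List.nil_append, List.append_nil] at hP hG
    rw [hG] at hP
    simp only [List.cons.injEq] at hP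
    obtain ⟨e1, _, e2, e3⟩ := hP
    have hax : x = a := by omega
    have hyb : y = b := by omega
    rw [← hax, ← hyb, ← e3]
    exact hq
  · -- q = [g]
    simp only [List.cons_append, List.nil_append, List.cons.injEq] at hP
    obtain ⟨e1, hP⟩ := hP
    rw [hP] at hG
    simp only [List.cons_append, List.cons.injEq] at hG
    obtain ⟨e2, _⟩ := hG
    omega
  · -- q = g :: h2 :: q''
    simp only [List.cons_append, List.cons.injEq] at hP
    obtain ⟨e1, e2, hP⟩ := hP
    rcases p with _ | ⟨w, _ | ⟨v, p'⟩⟩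
    · -- p = []
      simp only [List.nil_append, List.cons.injEq] at hG
      obtain ⟨f1, f2, f3⟩ := hG
      simp only [List.append_nil] at hP
      rw [hP] at f3
      simp only [List.cons.injEq] at f3
      obtain ⟨f4, f5⟩ := f3
      have hax : a = x := by omega
      have hby : b = y := by omega
      rw [hax, hby, f5]
      exact hq
    · -- p = [w]
      simp only [List.cons_append, List.nil_append, List.cons.injEq] at hG
      obtain ⟨e3, e4, _⟩ := hG
      omega
    · -- p = w :: v :: p'
      simp only [List.cons_append, List.cons.injEq] at hG
      obtain ⟨e3, e4, hG⟩ := hG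
      rcases p' with _ | ⟨z, p''⟩
      · -- p' = []
        simp only [List.nil_append, List.cons.injEq] at hG
        obtain ⟨e5, hs⟩ := hG
        rcases q'' with _ | ⟨z2, q3⟩
        · -- q'' = [] ; p = [w, v] = (b+1) :: t
          simp only [List.nil_append, List.cons.injEq] at hP
          obtain ⟨e6, ht⟩ := hP
          -- e1 : g = a+1, e2 : h2 = 1, e3 : w = x+1, e4 : v = 1, e5 : g = y+1,
          -- hs : h2 :: [] = s, e6 : w = b+1, ht : [v] = t
          have hax : a = y := by omega
          have hbx : b = x := by omega
          have hts : t = [1] := by rw [← ht, e4]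
          have hss : s = [1] := by rw [← hs, e2]
          rw [hss] at hq
          have h111 := quid_len3 hq (by simp)
          simp only [List.cons.injEq] at h111
          obtain ⟨hx1, hy1, _⟩ := h111
          rw [hax, hbx, hts, hx1, hy1]
          exact quid_111
        · -- q'' = z2 :: q3
          simp only [List.cons_append, List.cons.injEq] at hP
          obtain ⟨e6, ht⟩ := hP
          -- e5 : g = y+1 so a = y ; hs : h2 :: z2 :: q3 = s so s = 1 :: (b+1) :: q3
          -- ht : q3 ++ [w, v] = t = q3 ++ [x+1, 1]
          have hax : a = y := by omega
          have hss : s = 1 :: (b+1) :: q3 := by rw [← hs, e2, e6]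
          have hts : t = q3 ++ [x+1, 1] := by rw [← ht, e3, e4]
          have htlen : t.length = q3.length + 2 := by rw [hts]; simp
          rw [hss] at hq
          have h1 : IsQuiddity ((y :: 1 :: (b+1) :: q3) ++ [x]) :=
            quid_swap (u := [x]) (v := y :: 1 :: (b+1) :: q3) hq
          have hy' : y - 1 + 1 = y := by omega
          have h1' : IsQuiddity (((y-1)+1) :: 1 :: (b+1) :: (q3 ++ [x])) := by
            rw [hy']
            simpa using h1
          have h2' : IsQuiddity ((y-1) :: b :: (q3 ++ [x])) :=
            IH ((q3 ++ [x]).length) (by simp; omega) _ _ _ rfl h1'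
          have h3 : IsQuiddity ([x] ++ ((y-1) :: b :: q3)) := by
            refine quid_swap (u := (y-1) :: b :: q3) (v := [x]) ?_
            simpa using h2'
          have h4 := (show IsQuiddity (x :: (y-1) :: b :: q3) from h3).grow
          rw [hy'] at h4
          have h5 : IsQuiddity ((y :: b :: q3) ++ [x+1, 1]) :=
            quid_swap (u := [x+1, 1]) (v := y :: b :: q3) h4
          rw [hax, hts]
          simpa using h5
      · -- p' = z :: p''
        simp only [List.cons_append, List.cons.injEq] at hG
        obtain ⟨e5, hs⟩ := hG
        rcases q'' with _ | ⟨z2, q3⟩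
        · -- q'' = [] : p = (b+1) :: t, p = (x+1) :: 1 :: (y+1) :: p''
          simp only [List.nil_append, List.cons.injEq] at hP
          obtain ⟨e6, ht⟩ := hP
          -- e6 : w = b+1, ht : v :: z :: p'' = t ; s = p'' ++ [a+1, 1]
          have hbx : b = x := by omega
          have hts : t = 1 :: (y+1) :: p'' := by rw [← ht, e4, e5]
          have hss : s = p'' ++ [a+1, 1] := by
            rw [← hs, e1, e2]
          have htlen : t.length = p''.length + 2 := by rw [hts]; simp
          rw [hss] at hq
          have h1 : IsQuiddity ([a+1, 1] ++ (x :: y :: p'')) := by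
            refine quid_swap (u := x :: y :: p'') (v := [a+1, 1]) ?_
            simpa using hq
          have hx' : x - 1 + 1 = x := by omega
          have h1' : IsQuiddity ((a+1) :: 1 :: ((x-1)+1) :: (y :: p'')) := by
            rw [hx']
            simpa using h1
          have h2' : IsQuiddity (a :: (x-1) :: y :: p'') :=
            IH ((y :: p'').length) (by simp; omega) _ _ _ rfl h1'
          have h3 : IsQuiddity (((x-1) :: y :: p'') ++ [a]) := by
            refine quid_swap (u := [a]) (v := (x-1) :: y :: p'') ?_
            simpa using h2'
          have h3' : IsQuiddity ((x-1) :: y :: (p'' ++ [a])) := by simpa using h3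
          have h4 := h3'.grow
          rw [hx'] at h4
          have h5 : IsQuiddity ([a] ++ (x :: 1 :: (y+1) :: p'')) := by
            refine quid_swap (u := x :: 1 :: (y+1) :: p'') (v := [a]) ?_
            simpa using h4
          rw [hbx, hts]
          simpa using h5
        · -- q'' = z2 :: q3
          simp only [List.cons_append, List.cons.injEq] at hP
          obtain ⟨e6, ht⟩ := hP
          -- e6 : z2 = b+1, ht : q3 ++ (w :: v :: z :: p'') = t
          -- s = p'' ++ (a+1) :: 1 :: (b+1) :: q3
          have hss : s = p'' ++ (a+1) :: 1 :: (b+1) :: q3 := by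
            rw [← hs, e1, e2, e6]
          have hts : t = q3 ++ (x+1) :: 1 :: (y+1) :: p'' := by
            rw [← ht, e3, e4, e5]
          have htlen : t.length = q3.length + 3 + p''.length := by rw [hts]; simp; omega
          rw [hss] at hq
          have h1 : IsQuiddity (((a+1) :: 1 :: (b+1) :: q3) ++ (x :: y :: p'')) := by
            refine quid_swap (u := x :: y :: p'') (v := (a+1) :: 1 :: (b+1) :: q3) ?_
            simpa using hq
          have h1' : IsQuiddity ((a+1) :: 1 :: (b+1) :: (q3 ++ x :: y :: p'')) := by
            simpa using h1
          have h2' : IsQuiddity (a :: b :: (q3 ++ x :: y :: p'')) :=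
            IH ((q3 ++ x :: y :: p'').length) (by simp; omega) _ _ _ rfl h1'
          have h3 : IsQuiddity ((x :: y :: p'') ++ (a :: b :: q3)) := by
            refine quid_swap (u := a :: b :: q3) (v := x :: y :: p'') ?_
            simpa using h2'
          have h3' : IsQuiddity (x :: y :: (p'' ++ a :: b :: q3)) := by simpa using h3
          have h4 := h3'.grow
          have h5 : IsQuiddity ((a :: b :: q3) ++ ((x+1) :: 1 :: (y+1) :: p'')) := by
            refine quid_swap (u := (x+1) :: 1 :: (y+1) :: p'') (v := a :: b :: q3) ?_
            simpa using h4
          rw [hts]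
          simpa using h5

theorem shrinkAux : ∀ (n : ℕ) (t : List ℕ) (a b : ℕ), t.length = n →
    IsQuiddity ((a+1) :: 1 :: (b+1) :: t) → IsQuiddity (a :: b :: t) := by
  intro n
  induction n using Nat.strong_induction_on with
  | _ n IH =>
    intro t a b hlen hq
    rcases Nat.eq_zero_or_pos n with rfl | hn1
    · -- t = []
      have ht : t = [] := List.length_eq_zero_iff.mp hlen
      subst ht
      have h111 := quid_len3 hq (by simp)
      simp only [List.cons.injEq] at h111
      obtain ⟨ha, _, hb, _⟩ := h111
      have ha0 : a = 0 := by omega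
      have hb0 : b = 0 := by omega
      rw [ha0, hb0]
      exact IsQuiddity.base
    · obtain ⟨x, y, s, hq0, hd⟩ := quid_inv hq (by simp)
      rcases dih_normal hd with hrot | hrev
      · exact shrinkRot n IH x y a b s t hq0 hrot hlen hn1
      · have hGrev : ((x+1) :: 1 :: (y+1) :: s).reverse = s.reverse ++ [y+1, 1, x+1] := by
          simp
        have hrot2 : ((y+1) :: 1 :: (x+1) :: s.reverse) ~r ((a+1) :: 1 :: (b+1) :: t) := by
          refine List.IsRotated.trans ?_ (hGrev ▸ hrev)
          have he : ((y+1) :: 1 :: (x+1) :: s.reverse) = [y+1, 1, x+1] ++ s.reverse := by simp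
          rw [he]
          exact (List.isRotated_append).symm
        have hq0' : IsQuiddity (y :: x :: s.reverse) := by
          have hr1 : IsQuiddity (x :: y :: s).reverse := quid_dih hq0 (dih_rev _)
          have hr2 : (x :: y :: s).reverse = s.reverse ++ [y, x] := by simp
          have := quid_swap (u := s.reverse) (v := [y, x]) (hr2 ▸ hr1)
          simpa using this
        exact shrinkRot n IH y x a b s.reverse t hq0' hrot2 hlen hn1

/-- The shrink theorem: a `1` can be removed from any quiddity cycle. -/
theorem shrinkL {l : List ℕ} {a b : ℕ} {t : List ℕ} (h : IsQuiddity l)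
    (hd : DihEquiv l ((a+1) :: 1 :: (b+1) :: t)) : IsQuiddity (a :: b :: t) :=
  shrinkAux t.length t a b rfl (quid_dih h hd)

lemma dih_length {a b : List ℕ} (h : DihEquiv a b) : a.length = b.length := by
  induction h with
  | rel a b hab => rcases hab with rfl | rfl <;> simp
  | refl a => rfl
  | symm _ _ _ ih => omega
  | trans _ _ _ _ _ ih1 ih2 => omega

/-- no two cyclically adjacent ones in a quiddity cycle of length ≥ 4 -/
lemma quid_no11 {c : List ℕ} (hq : IsQuiddity c) (h4 : 4 ≤ c.length) :
    ∀ t', ¬ DihEquiv c (1 :: 1 :: t') := by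
  intro t' hd
  have hq' : IsQuiddity (1 :: 1 :: t') := quid_dih hq hd
  have hlen : c.length = t'.length + 2 := by simpa using dih_length hd
  rcases List.eq_nil_or_concat' t' with rfl | ⟨t3, z, rfl⟩
  · simp at hlen; omega
  have hz : 1 ≤ z := quid_pos hq' (by simp) z (by simp)
  have h1 : IsQuiddity ([z] ++ (1 :: 1 :: t3)) := by
    refine quid_swap (u := 1 :: 1 :: t3) (v := [z]) ?_
    simpa using hq'
  have h1' : IsQuiddity (((z-1)+1) :: 1 :: (0+1) :: t3) := by
    have hz' : z - 1 + 1 = z := by omega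
    rw [hz']
    simpa using h1
  have h2 := shrinkAux t3.length t3 (z-1) 0 rfl h1'
  have h3 : 3 ≤ ((z-1) :: 0 :: t3).length := by simp at hlen ⊢; omega
  have := quid_pos h2 h3 0 (by simp)
  omega

/-- count bound for lists with no adjacent ones -/
lemma count_bound : ∀ c : List ℕ, (∀ u v : List ℕ, c ≠ u ++ 1 :: 1 :: v) →
    2 * c.count 1 ≤ c.length + (if c.head? = some 1 then 1 else 0) := by
  intro c
  induction c with
  | nil => simp
  | cons z c' ih =>
      intro hno
      have hno' : ∀ u v : List ℕ, c' ≠ u ++ 1 :: 1 :: v := by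
        intro u v huv
        exact hno (z :: u) v (by simp [huv])
      have hb := ih hno'
      by_cases hz : z = 1
      · subst hz
        cases c' with
        | nil => simp
        | cons w c'' =>
            have hw : w ≠ 1 := by
              intro hw
              exact hno [] c'' (by simp [hw])
            simp only [List.count_cons, List.head?_cons, List.length_cons,
              beq_iff_eq, Option.some.injEq] at hb ⊢
            split_ifs at hb ⊢ <;> omega
      · simp only [List.count_cons, List.head?_cons, List.length_cons,
          beq_iff_eq, Option.some.injEq] at hb ⊢
        split_ifs at hb ⊢ <;> omega

lemma alt_struct : ∀ (n : ℕ) (c : List ℕ), c.length = n → (∀ v ∈ c, 1 ≤ v) →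
    2 * c.count 1 = c.length → (∀ u v : List ℕ, c ≠ u ++ 1 :: 1 :: v) →
    ∃ e1 e2 : List ℕ, c = qsiL e1 ++ psiL e2 := by
  intro n
  induction n using Nat.strong_induction_on with
  | _ n IH =>
    intro c hlen hpos hcnt hno
    cases c with
    | nil => exact ⟨[], [], by simp⟩
    | cons z c' =>
        have hno' : ∀ u v : List ℕ, c' ≠ u ++ 1 :: 1 :: v := by
          intro u v huv
          exact hno (z :: u) v (by simp [huv])
        by_cases hz : z = 1
        · subst hz
          cases c' with
          | nil => simp at hcnt
          | cons w c3 =>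
              have hw1 : w ≠ 1 := by
                intro hw
                exact hno [] c3 (by simp [hw])
              have hw2 : 2 ≤ w := by
                have := hpos w (by simp)
                omega
              have hno3 : ∀ u v : List ℕ, c3 ≠ u ++ 1 :: 1 :: v := by
                intro u v huv
                exact hno (1 :: w :: u) v (by simp [huv])
              have hcnt3 : 2 * c3.count 1 = c3.length := by
                simp only [List.count_cons, List.length_cons, beq_iff_eq] at hcnt
                split_ifs at hcnt <;> omega
              obtain ⟨e1, e2, he⟩ := IH c3.length (by simp at hlen; omega) c3 rfl
                (fun v hv => hpos v (by simp [hv])) hcnt3 hno3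
              refine ⟨(w-2) :: e1, e2, ?_⟩
              have hw' : w - 2 + 2 = w := by omega
              simp [he, hw']
        · have hz2 : 2 ≤ z := by
            have := hpos z (by simp)
            omega
          cases c' with
          | nil =>
              simp only [List.count_cons, List.length_cons, beq_iff_eq,
                List.count_nil, List.length_nil] at hcnt
              split_ifs at hcnt <;> omega
          | cons w c3 =>
              by_cases hw : w = 1
              · subst hw
                have hno3 : ∀ u v : List ℕ, c3 ≠ u ++ 1 :: 1 :: v := by
                  intro u v huv
                  exact hno (z :: 1 :: u) v (by simp [huv])
                have hcnt3 : 2 * c3.count 1 = c3.length := by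
                  simp only [List.count_cons, List.length_cons, beq_iff_eq] at hcnt
                  split_ifs at hcnt <;> omega
                obtain ⟨e1, e2, he⟩ := IH c3.length (by simp at hlen; omega) c3 rfl
                  (fun v hv => hpos v (by simp [hv])) hcnt3 hno3
                cases e1 with
                | nil =>
                    refine ⟨[], (z-2) :: e2, ?_⟩
                    have hz' : z - 2 + 2 = z := by omega
                    simp at he
                    simp [he, hz']
                | cons f e1' =>
                    exfalso
                    apply hno [z] ((f+2) :: qsiL e1' ++ psiL e2)
                    simp [he]
              · exfalso
                have hb := count_bound (w :: c3) (by
                  intro u v huv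
                  exact hno' u v huv)
                simp only [List.count_cons, List.length_cons, List.head?_cons,
                  beq_iff_eq, Option.some.injEq] at hb hcnt
                split_ifs at hb hcnt <;> omega

lemma psiL_last1 : ∀ (e' : List ℕ) (h : ℕ), ∃ m, psiL (h :: e') = m ++ [1] := by
  intro e'
  induction e' with
  | nil => exact fun h => ⟨[h+2], by simp⟩
  | cons g e'' ih =>
      intro h
      obtain ⟨m, hm⟩ := ih g
      exact ⟨(h+2) :: 1 :: m, by simp [hm]⟩

/-- a quiddity cycle in 𝒜' is dihedrally equivalent to a ψ-image -/
lemma alt_cyc {c : List ℕ} (hq : IsQuiddity c) (h4 : 4 ≤ c.length)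
    (heven : Even c.length) (hcnt : c.count 1 = c.length / 2) :
    ∃ f, DihEquiv c (psiL f) := by
  have hpos := quid_pos hq (by omega)
  have hcnt2 : 2 * c.count 1 = c.length := by
    obtain ⟨k, hk⟩ := heven
    omega
  have hno : ∀ u v : List ℕ, c ≠ u ++ 1 :: 1 :: v := by
    intro u v huv
    refine quid_no11 hq h4 (v ++ u) ?_
    rw [huv]
    have := dih_append u (1 :: 1 :: v)
    simpa using this
  obtain ⟨e1, e2, he⟩ := alt_struct c.length c rfl hpos hcnt2 hno
  cases e1 with
  | nil =>
      refine ⟨e2, ?_⟩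
      simp at he
      rw [he]
      exact dih_refl _
  | cons f1 e1' =>
      cases e2 with
      | nil =>
          refine ⟨f1 :: e1', dih_of_isRotated ?_⟩
          rw [he]
          simpa using qsiL_isRot_psiL (f1 :: e1')
      | cons f2 e2' =>
          exfalso
          obtain ⟨m, hm⟩ := psiL_last1 e2' f2
          apply quid_no11 hq h4 ((f1+2) :: qsiL e1' ++ m)
          have hc2 : c = (1 :: ((f1+2) :: qsiL e1' ++ m)) ++ [1] := by
            simp [he, hm]
          rw [hc2]
          have := dih_append (1 :: ((f1+2) :: qsiL e1' ++ m)) [1]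
          simpa using this

/-- the iterated-shrink lemma for inverting ψ -/
lemma ungen : ∀ (t : List ℕ) (c d : ℕ) (p : List ℕ),
    IsQuiddity ((c+1) :: 1 :: (psiL t ++ (d+1) :: p)) → IsQuiddity (c :: (t ++ d :: p)) := by
  intro t
  induction t with
  | nil =>
      intro c d p h
      simp only [psiL_nil, List.nil_append] at h
      simpa using shrinkAux p.length p c d rfl h
  | cons xx t' ih =>
      intro c d p h
      have h0 : IsQuiddity ((c+1) :: 1 :: ((xx+1)+1) :: (1 :: (psiL t' ++ (d+1) :: p))) := by
        simpa using h
      have h1 := shrinkAux _ _ _ _ rfl h0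
      -- h1 : IsQuiddity (c :: (xx+1) :: 1 :: (psiL t' ++ (d+1) :: p))
      have h2 : IsQuiddity (((xx+1) :: 1 :: (psiL t' ++ (d+1) :: p)) ++ [c]) :=
        quid_swap (u := [c]) (v := (xx+1) :: 1 :: (psiL t' ++ (d+1) :: p)) h1
      have h2' : IsQuiddity ((xx+1) :: 1 :: (psiL t' ++ (d+1) :: (p ++ [c]))) := by
        simpa using h2
      have h3 := ih xx d (p ++ [c]) h2'
      -- h3 : IsQuiddity (xx :: (t' ++ d :: (p ++ [c])))
      have h4 : IsQuiddity ([c] ++ (xx :: (t' ++ d :: p))) := by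
        refine quid_swap (u := xx :: (t' ++ d :: p)) (v := [c]) ?_
        simpa using h3
      simpa using h4

/-- inverting ψ : if ψ(f) is a quiddity cycle then so is f -/
lemma unpsi : ∀ {f : List ℕ}, IsQuiddity (psiL f) → IsQuiddity f := by
  intro f h
  cases f with
  | nil =>
      exact absurd (quid_len_ge2 h) (by simp)
  | cons x f' =>
      cases f' with
      | nil =>
          exfalso
          have := quid_len2 h (by simp)
          simp at this
      | cons y f'' =>
          obtain ⟨t1, z, hz⟩ : ∃ L b, y :: f'' = L ++ [b] :=
            (List.eq_nil_or_concat' (y :: f'')).resolve_left (by simp)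
          rw [hz] at h ⊢
          have h0 : IsQuiddity (((x+1)+1) :: 1 :: (psiL t1 ++ ((z+1)+1) :: [1])) := by
            have : psiL (x :: (t1 ++ [z])) = (x+2) :: 1 :: (psiL t1 ++ [z+2, 1]) := by
              rw [psiL_cons, psiL_append]
              simp
            rw [this] at h
            simpa using h
          have h1 := ungen t1 (x+1) (z+1) [1] h0
          -- h1 : IsQuiddity ((x+1) :: (t1 ++ (z+1) :: [1]))
          have h2 : IsQuiddity ([z+1, 1] ++ ((x+1) :: t1)) := by
            refine quid_swap (u := (x+1) :: t1) (v := [z+1, 1]) ?_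
            simpa using h1
          have h2' : IsQuiddity ((z+1) :: 1 :: ((x)+1) :: t1) := by
            simpa using h2
          have h3 := shrinkAux t1.length t1 z x rfl h2'
          have h4 : IsQuiddity ((x :: t1) ++ [z]) := by
            refine quid_swap (u := [z]) (v := x :: t1) ?_
            simpa using h3
          simpa using h4


def psibar : Cyc → Cyc :=
  Quotient.lift (fun c => cyc (psiL c)) (fun _ _ h => Quotient.sound (psiL_dih h))


/-- The map `ψ̄` induced by `ψ` is a well-defined bijection from the set `𝒜` of
quiddity cycles onto `𝒜'`. -/
theorem psiBar_bijOn :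
    ∃ ψbar : Cyc → Cyc,
      (∀ c : List ℕ, IsQuiddity c → ψbar (cyc c) = cyc (psiL c)) ∧
      Set.BijOn ψbar QuiddityCyc QuiddityCyc' := by
  refine ⟨psibar, fun c _ => rfl, ?_, ?_, ?_⟩
  · -- MapsTo
    rintro x ⟨c, hc, rfl⟩
    refine ⟨psiL c, quid_psiL hc, ⟨c.length, by simp; omega⟩, ?_, rfl⟩
    rw [psiL_count, psiL_length]
    omega
  · -- InjOn
    rintro x ⟨c, hc, rfl⟩ y ⟨d, hd, rfl⟩ hxy
    have hde : DihEquiv (psiL c) (psiL d) := Quotient.exact hxy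
    apply Quotient.sound
    show DihEquiv c d
    rcases dih_normal hde with hrot | hrev
    · exact dih_of_isRotated (psiL_isRot_inj hrot)
    · have h1 : qsiL c.reverse ~r psiL d := by rw [← psiL_reverse]; exact hrev
      have h2 : psiL c.reverse ~r psiL d :=
        (qsiL_isRot_psiL c.reverse).symm.trans h1
      have h3 : c.reverse ~r d := psiL_isRot_inj h2
      exact dih_trans (dih_rev c) (dih_of_isRotated h3)
  · -- SurjOn
    rintro x ⟨c, hc, heven, hcnt, rfl⟩
    have h2 := quid_len_ge2 hc
    have hne2 : c.length ≠ 2 := by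
      intro h
      have := quid_len2 hc h
      rw [this] at hcnt
      simp at hcnt
    have h4 : 4 ≤ c.length := by
      obtain ⟨k, hk⟩ := heven
      omega
    obtain ⟨f, hdf⟩ := alt_cyc hc h4 heven hcnt
    have hqf : IsQuiddity f := unpsi (quid_dih hc hdf)
    exact ⟨cyc f, ⟨f, hqf, rfl⟩, Quotient.sound (dih_symm hdf)⟩
end

section
/- For every ℓ ∈ ℕ there exist finite sets E ⊆ 𝒜 and F ⊆ ⋃_{m≥1} ℕ₀ᵐ such that every element of F has length at least ℓ, and every quiddity cycle not belonging to E contains an element of F. -/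

lemma sum_take_eq (m : List ℕ) (L : ℕ) :
    (m.take L).sum = ∑ i ∈ Finset.range L, m.getD i 0 := by
  induction m generalizing L with
  | nil => simp
  | cons a t ih =>
    cases L with
    | zero => simp
    | succ L =>
      rw [List.take_succ_cons, List.sum_cons, ih, Finset.sum_range_succ']
      simp [Nat.add_comm]

lemma sum_shift_mod (l : List ℕ) (i : ℕ) (hn : 0 < l.length) :
    ∑ k ∈ Finset.range l.length, l.getD ((k + i) % l.length) 0 = l.sum := by
  have h0 : l.sum = ∑ k ∈ Finset.range l.length, l.getD k 0 := by
    conv_lhs => rw [← List.take_length (l := l)]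
    exact sum_take_eq l l.length
  rw [h0, ← Fin.sum_univ_eq_sum_range, ← Fin.sum_univ_eq_sum_range]
  haveI : NeZero l.length := ⟨hn.ne'⟩
  have := Equiv.sum_comp (Equiv.addRight (⟨i % l.length, Nat.mod_lt _ hn⟩ : Fin l.length))
    (fun k : Fin l.length => l.getD k.val 0)
  rw [← this]
  refine Finset.sum_congr rfl fun k _ => ?_
  congr 1
  show (k.val + i) % l.length =
    (k + (⟨i % l.length, Nat.mod_lt _ hn⟩ : Fin l.length)).val
  rw [Fin.add_def]
  conv_lhs => rw [Nat.add_mod, Nat.mod_eq_of_lt k.isLt]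

lemma window_sum (l : List ℕ) (L k : ℕ) (hL : L ≤ l.length) :
    ((l.rotate k).take L).sum = ∑ i ∈ Finset.range L, l.getD ((i + k) % l.length) 0 := by
  rw [sum_take_eq]
  refine Finset.sum_congr rfl fun i hi => ?_
  have hi' : i < (l.rotate k).length := by
    rw [List.length_rotate]; exact lt_of_lt_of_le (Finset.mem_range.mp hi) hL
  rw [List.getD_eq_getElem _ _ hi', List.getElem_rotate,
    List.getD_eq_getElem]

lemma total_window (l : List ℕ) (L : ℕ) (hL : L ≤ l.length) (hn : 0 < l.length) :
    ∑ k ∈ Finset.range l.length, ((l.rotate k).take L).sum = L * l.sum := by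
  calc ∑ k ∈ Finset.range l.length, ((l.rotate k).take L).sum
      = ∑ k ∈ Finset.range l.length, ∑ i ∈ Finset.range L,
          l.getD ((i + k) % l.length) 0 :=
        Finset.sum_congr rfl fun k _ => window_sum l L k hL
    _ = ∑ i ∈ Finset.range L, ∑ k ∈ Finset.range l.length,
          l.getD ((k + i) % l.length) 0 := by
        rw [Finset.sum_comm]
        exact Finset.sum_congr rfl fun i _ => Finset.sum_congr rfl fun k _ => by
          rw [Nat.add_comm]
    _ = ∑ _i ∈ Finset.range L, l.sum :=
        Finset.sum_congr rfl fun i _ => sum_shift_mod l i hn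
    _ = L * l.sum := by rw [Finset.sum_const, Finset.card_range, smul_eq_mul]

lemma exists_small_window (l : List ℕ) (L : ℕ) (hL1 : 1 ≤ L) (hL : L ≤ l.length)
    (hsum : l.sum + 6 = 3 * l.length) :
    ∃ k, ((l.rotate k).take L).sum ≤ 3 * L := by
  have hn : 0 < l.length := lt_of_lt_of_le hL1 hL
  have htot := total_window l L hL hn
  have hle : ∑ k ∈ Finset.range l.length, ((l.rotate k).take L).sum
      ≤ ∑ _k ∈ Finset.range l.length, 3 * L := by
    rw [htot, Finset.sum_const, Finset.card_range, smul_eq_mul]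
    calc L * l.sum ≤ L * (3 * l.length) := Nat.mul_le_mul_left _ (by omega)
      _ = l.length * (3 * L) := by ring
  obtain ⟨k, _, hk⟩ := Finset.exists_le_of_sum_le ⟨0, Finset.mem_range.mpr hn⟩ hle
  exact ⟨k, hk⟩

lemma quiddity_sum {c : List ℕ} (h : IsQuiddity c) : c.sum + 6 = 3 * c.length := by
  induction h with
  | base => rfl
  | dih _ hstep ih =>
    rcases hstep with rfl | rfl
    · rwa [(List.rotate_perm _ _).sum_eq, List.length_rotate]
    · rwa [List.sum_reverse, List.length_reverse]
  | grow _ ih =>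
    simp only [List.sum_cons, List.length_cons] at ih ⊢
    omega

lemma finite_bounded_lists (L B : ℕ) :
    {l : List ℕ | l.length ≤ L ∧ ∀ x ∈ l, x ≤ B}.Finite := by
  have hsub : {l : List ℕ | l.length ≤ L ∧ ∀ x ∈ l, x ≤ B} ⊆
      (List.map (Fin.val : Fin (B + 1) → ℕ)) '' {l : List (Fin (B + 1)) | l.length ≤ L} := by
    rintro l ⟨hlen, hB⟩
    refine ⟨l.map (fun x => ⟨min x B, Nat.lt_succ_of_le (Nat.min_le_right _ _)⟩),
      by simpa using hlen, ?_⟩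
    rw [List.map_map]
    conv_rhs => rw [← List.map_id l]
    refine List.map_congr_left fun a ha => ?_
    simp [Nat.min_eq_left (hB a ha)]
  exact ((List.finite_length_le (Fin (B + 1)) L).image _).subset hsub

lemma dihequiv_rotate (c : List ℕ) (k : ℕ) : DihEquiv c (c.rotate k) := by
  induction k with
  | zero => rw [List.rotate_zero]; exact Relation.EqvGen.refl c
  | succ k ih =>
    refine Relation.EqvGen.trans _ _ _ ih (Relation.EqvGen.rel _ _ (Or.inl ?_))
    rw [List.rotate_rotate]

/-- For any `ℓ` there are finite sets `E ⊆ 𝒜` and `F` of finite sequences of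
length at least `ℓ` such that every quiddity cycle not in `E` contains an
element of `F`. -/
theorem local_description (ℓ : ℕ) :
    ∃ (E : Set Cyc) (F : Set (List ℕ)),
      E.Finite ∧ F.Finite ∧ E ⊆ QuiddityCyc ∧ (∀ f ∈ F, f ≠ []) ∧
      (∀ f ∈ F, ℓ ≤ f.length) ∧
      ∀ c : List ℕ, IsQuiddity c → cyc c ∉ E → ∃ f ∈ F, CycContains c f := by
  set L := max ℓ 1 with hLdef
  have hL1 : 1 ≤ L := le_max_right ℓ 1
  refine ⟨cyc '' {c | IsQuiddity c ∧ c.length < L},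
    {f | f.length = L ∧ f.sum ≤ 3 * L}, ?_, ?_, ?_, ?_, ?_, ?_⟩
  · refine Set.Finite.image _ ((finite_bounded_lists L (3 * L)).subset ?_)
    rintro c ⟨hq, hlen⟩
    have hsum := quiddity_sum hq
    refine ⟨hlen.le, fun x hx => ?_⟩
    have hx' := List.single_le_sum (fun y _ => Nat.zero_le y) x hx
    omega
  · refine (finite_bounded_lists L (3 * L)).subset ?_
    rintro f ⟨h1, h2⟩
    exact ⟨h1.le, fun x hx =>
      le_trans (List.single_le_sum (fun y _ => Nat.zero_le y) x hx) h2⟩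
  · rintro x ⟨c, ⟨hq, _⟩, rfl⟩
    exact ⟨c, hq, rfl⟩
  · rintro f ⟨h1, _⟩ rfl
    rw [List.length_nil] at h1
    omega
  · rintro f ⟨h1, _⟩
    rw [h1]
    exact le_max_left ℓ 1
  · intro c hq hnE
    have hlen : L ≤ c.length := by
      by_contra h
      exact hnE ⟨c, ⟨hq, by omega⟩, rfl⟩
    obtain ⟨k, hk⟩ := exists_small_window c L hL1 hlen (quiddity_sum hq)
    refine ⟨(c.rotate k).take L, ⟨?_, hk⟩,
      c.rotate k, dihequiv_rotate c k, (List.take_prefix _ _).isInfix⟩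
    rw [List.length_take, List.length_rotate]
    omega
end
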